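/- Assume β = δ = 0 and α = γτ². Then V² 𝓛 V⁻² = 𝓛ᵀ, where 𝓛ᵀ denotes the transpose of the matrix 𝓛 (detailed balance). -/

import Mathlib

open Matrix Complex

noncomputable section

/-- A particle configuration on `L` sites: each site is a hole (`0`) or a particle (`1`). -/
abbrev Conf (L : ℕ) := Fin L → Fin 2

/-- The 2×2 matrix `A` acting on the `j`-th tensor factor (0-based index) of `(ℂ²)^{⊗L}`
and the identity elsewhere.  (For `j ≥ L` this is the identity.) -/
def site (L : ℕ) (A : Matrix (Fin 2) (Fin 2) ℂ) (j : ℕ) :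
    Matrix (Conf L) (Conf L) ℂ :=
  Matrix.of fun η' η =>
    if h : j < L then
      A (η' ⟨j, h⟩) (η ⟨j, h⟩) *
        ∏ k ∈ Finset.univ.erase (⟨j, h⟩ : Fin L), (if η' k = η k then (1 : ℂ) else 0)
    else (if η' = η then (1 : ℂ) else 0)

def sigmaPlus : Matrix (Fin 2) (Fin 2) ℂ := !![0, 1; 0, 0]
def sigmaMinus : Matrix (Fin 2) (Fin 2) ℂ := !![0, 0; 1, 0]
def numOp : Matrix (Fin 2) (Fin 2) ℂ := !![0, 0; 0, 1]
def sigmaX : Matrix (Fin 2) (Fin 2) ℂ := !![0, 1; 1, 0]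
def sigmaY : Matrix (Fin 2) (Fin 2) ℂ := !![0, -Complex.I; Complex.I, 0]
def sigmaZ : Matrix (Fin 2) (Fin 2) ℂ := !![1, 0; 0, -1]

/-- The open ASEP generator `𝓛` on `L` sites with bulk rates `p` (right), `q` (left),
left-boundary entry/exit rates `α, γ` and right-boundary entry/exit rates `δ, β`.
Lattice sites are 0-based, so site `1` of the paper is index `0` and site `L` is `L-1`. -/
def asepGen (L : ℕ) (p q α β γ δ : ℝ) : Matrix (Conf L) (Conf L) ℂ :=
  (-((Real.sqrt (p * q) : ℝ) : ℂ)) •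
    (∑ j ∈ Finset.range (L - 1),
      (((Real.sqrt (p / q) : ℝ) : ℂ)⁻¹ •
          (site L sigmaMinus j * site L sigmaPlus (j + 1)
            - site L (1 - numOp) j * site L numOp (j + 1))
        + ((Real.sqrt (p / q) : ℝ) : ℂ) •
          (site L sigmaMinus (j + 1) * site L sigmaPlus j
            - site L numOp j * site L (1 - numOp) (j + 1))))
  - (α : ℂ) • (site L sigmaMinus 0 - 1 + site L numOp 0)
  - (γ : ℂ) • (site L sigmaPlus 0 - site L numOp 0)
  - (δ : ℂ) • (site L sigmaMinus (L - 1) - 1 + site L numOp (L - 1))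
  - (β : ℂ) • (site L sigmaPlus (L - 1) - site L numOp (L - 1))

/-- The diagonal matrix `V` acting on a configuration basis vector `e_η` by
`τ^{-Σ_j j η_j}` (with 1-based site labels as in the paper). -/
def Vmat (L : ℕ) (τ : ℂ) : Matrix (Conf L) (Conf L) ℂ :=
  Matrix.diagonal fun η : Conf L =>
    τ ^ (-(∑ j : Fin L, (((j : ℕ) : ℤ) + 1) * ((η j : ℕ) : ℤ)))

namespace DB
variable {L : ℕ}
variable {L : ℕ}

lemma site_apply (A : Matrix (Fin 2) (Fin 2) ℂ) {j : ℕ} (hj : j < L) (η' η : Conf L) :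
    site L A j η' η =
      A (η' ⟨j, hj⟩) (η ⟨j, hj⟩) *
        ∏ k ∈ Finset.univ.erase (⟨j, hj⟩ : Fin L), (if η' k = η k then (1 : ℂ) else 0) := by
  simp [site, hj]

lemma site_ne_zero {A : Matrix (Fin 2) (Fin 2) ℂ} {j : ℕ} (hj : j < L) {η' η : Conf L}
    (h : site L A j η' η ≠ 0) :
    A (η' ⟨j, hj⟩) (η ⟨j, hj⟩) ≠ 0 ∧ ∀ m, m ≠ (⟨j, hj⟩ : Fin L) → η' m = η m := by
  rw [site_apply A hj] at h
  rcases mul_ne_zero_iff.1 h with ⟨h1, h2⟩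
  refine ⟨h1, fun m hm => ?_⟩
  have := Finset.prod_ne_zero_iff.1 h2 m (Finset.mem_erase.2 ⟨hm, Finset.mem_univ m⟩)
  by_contra hc
  rw [if_neg hc] at this
  exact this rfl

lemma site_mul_ne_zero {A B : Matrix (Fin 2) (Fin 2) ℂ} {j k : ℕ} (hj : j < L) (hk : k < L)
    (hjk : j ≠ k) {η' η : Conf L}
    (h : (site L A j * site L B k) η' η ≠ 0) :
    A (η' ⟨j, hj⟩) (η ⟨j, hj⟩) ≠ 0 ∧ B (η' ⟨k, hk⟩) (η ⟨k, hk⟩) ≠ 0 ∧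
      ∀ m : Fin L, m ≠ ⟨j, hj⟩ → m ≠ ⟨k, hk⟩ → η' m = η m := by
  rw [Matrix.mul_apply] at h
  obtain ⟨σ, _, hσ⟩ := Finset.exists_ne_zero_of_sum_ne_zero h
  rcases mul_ne_zero_iff.1 hσ with ⟨h1, h2⟩
  obtain ⟨hA, hoff1⟩ := site_ne_zero hj h1
  obtain ⟨hB, hoff2⟩ := site_ne_zero hk h2
  have hfj : (⟨j, hj⟩ : Fin L) ≠ ⟨k, hk⟩ := by simp [Fin.ext_iff]; exact hjk
  refine ⟨?_, ?_, fun m hmj hmk => by rw [hoff1 m hmj, hoff2 m hmk]⟩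
  · rw [hoff2 _ hfj] at hA; exact hA
  · rw [← hoff1 _ hfj.symm] at hB; exact hB

lemma site_transpose (A : Matrix (Fin 2) (Fin 2) ℂ) (j : ℕ) :
    (site L A j)ᵀ = site L Aᵀ j := by
  ext η' η
  by_cases hj : j < L
  · rw [Matrix.transpose_apply, site_apply A hj, site_apply Aᵀ hj, Matrix.transpose_apply]
    exact congrArg _ (Finset.prod_congr rfl fun m _ => if_congr eq_comm rfl rfl)
  · simp only [site, Matrix.transpose_apply, Matrix.of_apply, dif_neg hj]
    exact if_congr eq_comm rfl rfl

lemma site_diagonal (v : Fin 2 → ℂ) {j : ℕ} (hj : j < L) :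
    site L (Matrix.diagonal v) j =
      Matrix.diagonal (fun η : Conf L => v (η ⟨j, hj⟩)) := by
  ext η' η
  rw [site_apply _ hj]
  by_cases hee : η' = η
  · subst hee
    simp
  · rw [Matrix.diagonal_apply_ne _ hee]
    by_cases hjj : η' ⟨j, hj⟩ = η ⟨j, hj⟩
    · have : ∃ m, m ≠ (⟨j, hj⟩ : Fin L) ∧ η' m ≠ η m := by
        by_contra hc
        push_neg at hc
        apply hee
        funext m
        by_cases hm : m = (⟨j, hj⟩ : Fin L)
        · rw [hm]; exact hjj
        · exact hc m hm
      obtain ⟨m, hm1, hm2⟩ := this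
      have hz : (if η' m = η m then (1 : ℂ) else 0) = 0 := if_neg hm2
      rw [Finset.prod_eq_zero (Finset.mem_erase.2 ⟨hm1, Finset.mem_univ m⟩) hz]
      ring
    · rw [Matrix.diagonal_apply_ne _ hjj]
      ring

lemma diag_comm (d : Conf L → ℂ) (c : ℂ) (M : Matrix (Conf L) (Conf L) ℂ)
    (h : ∀ η' η, M η' η ≠ 0 → d η' = c * d η) :
    Matrix.diagonal d * M = c • (M * Matrix.diagonal d) := by
  ext η' η
  rw [Matrix.diagonal_mul, Matrix.smul_apply, Matrix.mul_diagonal, smul_eq_mul]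
  by_cases hM : M η' η = 0
  · simp [hM]
  · rw [h _ _ hM]; ring

def S (η : Conf L) : ℤ := ∑ j : Fin L, (((j : ℕ) : ℤ) + 1) * ((η j : ℕ) : ℤ)

lemma S_shift2 {j k : Fin L} (hjk : j ≠ k) {η' η : Conf L}
    (hoff : ∀ m, m ≠ j → m ≠ k → η' m = η m) :
    S η' = S η + ((((j : ℕ) : ℤ) + 1) * (((η' j : ℕ) : ℤ) - ((η j : ℕ) : ℤ))
      + (((k : ℕ) : ℤ) + 1) * (((η' k : ℕ) : ℤ) - ((η k : ℕ) : ℤ))) := by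
  have hsplit : ∀ ζ : Conf L, S ζ = (((j : ℕ) : ℤ) + 1) * ((ζ j : ℕ) : ℤ)
      + ((((k : ℕ) : ℤ) + 1) * ((ζ k : ℕ) : ℤ)
        + ∑ m ∈ (Finset.univ.erase j).erase k, (((m : ℕ) : ℤ) + 1) * ((ζ m : ℕ) : ℤ)) := by
    intro ζ
    rw [S, ← Finset.add_sum_erase _ _ (Finset.mem_univ j),
      ← Finset.add_sum_erase _ _ (Finset.mem_erase.2 ⟨hjk.symm, Finset.mem_univ k⟩)]
  rw [hsplit η', hsplit η,
    Finset.sum_congr rfl (fun m hm => by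
      rcases Finset.mem_erase.1 hm with ⟨hmk, hm2⟩
      rcases Finset.mem_erase.1 hm2 with ⟨hmj, _⟩
      rw [hoff m hmj hmk])]
  ring

lemma S_shift1 (j : Fin L) {η' η : Conf L}
    (hoff : ∀ m, m ≠ j → η' m = η m) :
    S η' = S η + (((j : ℕ) : ℤ) + 1) * (((η' j : ℕ) : ℤ) - ((η j : ℕ) : ℤ)) := by
  have hsplit : ∀ ζ : Conf L, S ζ = (((j : ℕ) : ℤ) + 1) * ((ζ j : ℕ) : ℤ)
      + ∑ m ∈ Finset.univ.erase j, (((m : ℕ) : ℤ) + 1) * ((ζ m : ℕ) : ℤ) := by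
    intro ζ
    rw [S, ← Finset.add_sum_erase _ _ (Finset.mem_univ j)]
  rw [hsplit η', hsplit η,
    Finset.sum_congr rfl (fun m hm => by
      rw [hoff m (Finset.mem_erase.1 hm).1])]
  ring

def dvec (u : ℂ) (η : Conf L) : ℂ := u ^ (-S η) * u ^ (-S η)

lemma dvec_shift {u : ℂ} (hu : u ≠ 0) {η' η : Conf L} {t : ℤ} (h : S η' = S η + t) :
    dvec u η' = (u ^ (-t) * u ^ (-t)) * dvec u η := by
  rw [dvec, dvec, h, show -(S η + t) = -t + -S η by ring, zpow_add₀ hu]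
  ring


lemma diag_comm_hop {u : ℂ} (hu : u ≠ 0) {A B : Matrix (Fin 2) (Fin 2) ℂ}
    (a₁ b₁ a₂ b₂ : Fin 2)
    (hA : ∀ a b, A a b ≠ 0 → a = a₁ ∧ b = b₁)
    (hB : ∀ a b, B a b ≠ 0 → a = a₂ ∧ b = b₂)
    {j k : ℕ} (hj : j < L) (hk : k < L) (hjk : j ≠ k) {t : ℤ}
    (ht : ((j : ℤ) + 1) * (((a₁ : ℕ) : ℤ) - ((b₁ : ℕ) : ℤ))
        + ((k : ℤ) + 1) * (((a₂ : ℕ) : ℤ) - ((b₂ : ℕ) : ℤ)) = t)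
    {c : ℂ} (hc : u ^ (-t) * u ^ (-t) = c) :
    Matrix.diagonal (dvec u) * (site L A j * site L B k)
      = c • ((site L A j * site L B k) * Matrix.diagonal (dvec u)) := by
  subst hc
  apply diag_comm
  intro η' η hne
  obtain ⟨hA0, hB0, hoff⟩ := site_mul_ne_zero hj hk hjk hne
  obtain ⟨ha1, hb1⟩ := hA _ _ hA0
  obtain ⟨ha2, hb2⟩ := hB _ _ hB0
  have hfjk : (⟨j, hj⟩ : Fin L) ≠ ⟨k, hk⟩ := by
    simp only [ne_eq, Fin.mk.injEq]; exact hjk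
  have hS : S η' = S η + t := by
    have h2 := S_shift2 hfjk hoff
    rw [ha1, hb1, ha2, hb2] at h2
    rw [← ht]
    exact h2
  exact dvec_shift hu hS

lemma diag_comm_site {u : ℂ} (hu : u ≠ 0) {A : Matrix (Fin 2) (Fin 2) ℂ}
    (a₁ b₁ : Fin 2)
    (hA : ∀ a b, A a b ≠ 0 → a = a₁ ∧ b = b₁)
    {j : ℕ} (hj : j < L) {t : ℤ}
    (ht : ((j : ℤ) + 1) * (((a₁ : ℕ) : ℤ) - ((b₁ : ℕ) : ℤ)) = t)
    {c : ℂ} (hc : u ^ (-t) * u ^ (-t) = c) :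
    Matrix.diagonal (dvec u) * site L A j
      = c • (site L A j * Matrix.diagonal (dvec u)) := by
  subst hc
  apply diag_comm
  intro η' η hne
  obtain ⟨hA0, hoff⟩ := site_ne_zero hj hne
  obtain ⟨ha1, hb1⟩ := hA _ _ hA0
  have hS : S η' = S η + t := by
    have h2 := S_shift1 (⟨j, hj⟩ : Fin L) hoff
    rw [ha1, hb1] at h2
    rw [← ht]
    exact h2
  exact dvec_shift hu hS

lemma diag_comm_two (u : ℂ) (v w : Fin 2 → ℂ) {j k : ℕ} (hj : j < L) (hk : k < L) :
    Matrix.diagonal (dvec u) * (site L (Matrix.diagonal v) j * site L (Matrix.diagonal w) k)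
      = (site L (Matrix.diagonal v) j * site L (Matrix.diagonal w) k)
          * Matrix.diagonal (dvec u) := by
  rw [site_diagonal v hj, site_diagonal w hk]
  simp only [Matrix.diagonal_mul_diagonal]
  exact congrArg Matrix.diagonal (funext fun η => by ring)

lemma diag_comm_one (u : ℂ) (v : Fin 2 → ℂ) {j : ℕ} (hj : j < L) :
    Matrix.diagonal (dvec u) * site L (Matrix.diagonal v) j
      = site L (Matrix.diagonal v) j * Matrix.diagonal (dvec u) := by
  rw [site_diagonal v hj]
  simp only [Matrix.diagonal_mul_diagonal]
  exact congrArg Matrix.diagonal (funext fun η => by ring)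

lemma diagSite_comm (v w : Fin 2 → ℂ) {j k : ℕ} (hj : j < L) (hk : k < L) :
    site L (Matrix.diagonal v) j * site L (Matrix.diagonal w) k
      = site L (Matrix.diagonal w) k * site L (Matrix.diagonal v) j := by
  rw [site_diagonal v hj, site_diagonal w hk]
  simp only [Matrix.diagonal_mul_diagonal]
  exact congrArg Matrix.diagonal (funext fun η => by ring)

lemma sm_supp : ∀ a b : Fin 2, sigmaMinus a b ≠ 0 → a = 1 ∧ b = 0 := by
  intro a b
  fin_cases a <;> fin_cases b <;> simp [sigmaMinus]

lemma sp_supp : ∀ a b : Fin 2, sigmaPlus a b ≠ 0 → a = 0 ∧ b = 1 := by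
  intro a b
  fin_cases a <;> fin_cases b <;> simp [sigmaPlus]

lemma hnum : numOp = Matrix.diagonal ![0, 1] := by
  ext a b
  fin_cases a <;> fin_cases b <;> simp [numOp, Matrix.diagonal]

lemma h1n : (1 : Matrix (Fin 2) (Fin 2) ℂ) - numOp = Matrix.diagonal ![1, 0] := by
  ext a b
  fin_cases a <;> fin_cases b <;> simp [numOp, Matrix.diagonal, Matrix.one_apply]

lemma hspT : sigmaPlusᵀ = sigmaMinus := by
  ext a b
  fin_cases a <;> fin_cases b <;> rfl

lemma hsmT : sigmaMinusᵀ = sigmaPlus := by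
  ext a b
  fin_cases a <;> fin_cases b <;> rfl

lemma hnumT : numOpᵀ = numOp := by
  ext a b
  fin_cases a <;> fin_cases b <;> rfl

lemma h1nT : ((1 : Matrix (Fin 2) (Fin 2) ℂ) - numOp)ᵀ = 1 - numOp := by
  rw [Matrix.transpose_sub, Matrix.transpose_one, hnumT]

end DB

/-- **detailed balance.**  With `β = δ = 0` and `α = γτ²`,
conjugation by `V²` yields the transpose: `V² 𝓛 V⁻² = 𝓛ᵀ`. -/
theorem detailed_balance (L : ℕ) (hL : 1 ≤ L) (p q α β γ δ : ℝ)
    (hp : 0 < p) (hq : 0 < q)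
    (hα : 0 ≤ α) (hβ : 0 ≤ β) (hγ : 0 ≤ γ) (hδ : 0 ≤ δ)
    (hβ0 : β = 0) (hδ0 : δ = 0)
    (τ : ℝ) (hτ : τ = Real.sqrt (p / q))
    (hαγ : α = γ * τ ^ 2) :
    (Vmat L (τ : ℂ)) ^ 2 * asepGen L p q α β γ δ * ((Vmat L (τ : ℂ)) ^ 2)⁻¹ =
      (asepGen L p q α β γ δ)ᵀ := by
  subst hβ0 hδ0
  have hτ0 : 0 < τ := by rw [hτ]; exact Real.sqrt_pos.2 (div_pos hp hq)
  set u : ℂ := ((τ : ℝ) : ℂ) with hu_def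
  have hu : u ≠ 0 := Complex.ofReal_ne_zero.2 (ne_of_gt hτ0)
  have hsq : ((Real.sqrt (p / q) : ℝ) : ℂ) = u := by rw [hu_def, hτ]
  have h0L : (0 : ℕ) < L := hL
  set D : Matrix (Conf L) (Conf L) ℂ := Matrix.diagonal (DB.dvec u) with hDdef
  have hD : (Vmat L (τ : ℂ)) ^ 2 = D := by
    rw [sq]
    show Matrix.diagonal (fun η : Conf L => u ^ (-DB.S η))
        * Matrix.diagonal (fun η : Conf L => u ^ (-DB.S η)) = D
    rw [Matrix.diagonal_mul_diagonal]
    rfl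
  have hc1 : u⁻¹ * (u * u) = u := by field_simp
  have hc2 : u * (u⁻¹ * u⁻¹) = u⁻¹ := by field_simp
  have hα' : (α : ℂ) = (γ : ℂ) * (u * u) := by
    rw [hαγ, hu_def]; push_cast; ring
  -- conjugation facts
  have hLD : ∀ j : ℕ, j + 1 < L →
      D * (site L sigmaMinus j * site L sigmaPlus (j + 1))
        = (u * u) • ((site L sigmaMinus j * site L sigmaPlus (j + 1)) * D) := by
    intro j hj1
    exact DB.diag_comm_hop hu 1 0 0 1 DB.sm_supp DB.sp_supp (by omega) hj1 (by omega)
      (t := -1) (by push_cast [Fin.val_zero, Fin.val_one]; try ring)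
      (by norm_num)
  have hRD : ∀ j : ℕ, j + 1 < L →
      D * (site L sigmaMinus (j + 1) * site L sigmaPlus j)
        = (u⁻¹ * u⁻¹) • ((site L sigmaMinus (j + 1) * site L sigmaPlus j) * D) := by
    intro j hj1
    exact DB.diag_comm_hop hu 1 0 0 1 DB.sm_supp DB.sp_supp hj1 (by omega) (by omega)
      (t := 1) (by push_cast [Fin.val_zero, Fin.val_one]; try ring)
      (by norm_num)
  have hAD : ∀ j : ℕ, j + 1 < L →
      D * (site L (1 - numOp) j * site L numOp (j + 1))
        = (site L (1 - numOp) j * site L numOp (j + 1)) * D := by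
    intro j hj1
    rw [DB.h1n, DB.hnum]
    exact DB.diag_comm_two u _ _ (by omega) hj1
  have hBD : ∀ j : ℕ, j + 1 < L →
      D * (site L numOp j * site L (1 - numOp) (j + 1))
        = (site L numOp j * site L (1 - numOp) (j + 1)) * D := by
    intro j hj1
    rw [DB.h1n, DB.hnum]
    exact DB.diag_comm_two u _ _ (by omega) hj1
  have hS0D : D * site L sigmaMinus 0 = (u⁻¹ * u⁻¹) • (site L sigmaMinus 0 * D) :=
    DB.diag_comm_site hu 1 0 DB.sm_supp h0L (t := 1)
      (by push_cast [Fin.val_zero, Fin.val_one]; try ring) (by norm_num)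
  have hP0D : D * site L sigmaPlus 0 = (u * u) • (site L sigmaPlus 0 * D) :=
    DB.diag_comm_site hu 0 1 DB.sp_supp h0L (t := -1)
      (by push_cast [Fin.val_zero, Fin.val_one]; try ring) (by norm_num)
  have hN0D : D * site L numOp 0 = site L numOp 0 * D := by
    rw [DB.hnum]
    exact DB.diag_comm_one u _ h0L
  -- transposes
  have hLjT : ∀ j : ℕ, (site L sigmaMinus j * site L sigmaPlus (j + 1))ᵀ
      = site L sigmaMinus (j + 1) * site L sigmaPlus j := by
    intro j
    rw [Matrix.transpose_mul, DB.site_transpose, DB.site_transpose, DB.hsmT, DB.hspT]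
  have hRjT : ∀ j : ℕ, (site L sigmaMinus (j + 1) * site L sigmaPlus j)ᵀ
      = site L sigmaMinus j * site L sigmaPlus (j + 1) := by
    intro j
    rw [Matrix.transpose_mul, DB.site_transpose, DB.site_transpose, DB.hsmT, DB.hspT]
  have hAjT : ∀ j : ℕ, j + 1 < L → (site L (1 - numOp) j * site L numOp (j + 1))ᵀ
      = site L (1 - numOp) j * site L numOp (j + 1) := by
    intro j hj1
    rw [Matrix.transpose_mul, DB.site_transpose, DB.site_transpose, DB.hnumT, DB.h1nT,
      DB.h1n, DB.hnum]
    exact DB.diagSite_comm _ _ hj1 (by omega)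
  have hBjT : ∀ j : ℕ, j + 1 < L → (site L numOp j * site L (1 - numOp) (j + 1))ᵀ
      = site L numOp j * site L (1 - numOp) (j + 1) := by
    intro j hj1
    rw [Matrix.transpose_mul, DB.site_transpose, DB.site_transpose, DB.hnumT, DB.h1nT,
      DB.h1n, DB.hnum]
    exact DB.diagSite_comm _ _ hj1 (by omega)
  have hS0T : (site L sigmaMinus 0)ᵀ = site L sigmaPlus 0 := by
    rw [DB.site_transpose, DB.hsmT]
  have hP0T : (site L sigmaPlus 0)ᵀ = site L sigmaMinus 0 := by
    rw [DB.site_transpose, DB.hspT]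
  have hN0T : (site L numOp 0)ᵀ = site L numOp 0 := by
    rw [DB.site_transpose, DB.hnumT]
  -- the generator in terms of u
  set T : Matrix (Conf L) (Conf L) ℂ := ∑ j ∈ Finset.range (L - 1),
      (u⁻¹ • (site L sigmaMinus j * site L sigmaPlus (j + 1)
          - site L (1 - numOp) j * site L numOp (j + 1))
        + u • (site L sigmaMinus (j + 1) * site L sigmaPlus j
          - site L numOp j * site L (1 - numOp) (j + 1))) with hTdef
  have hGen : asepGen L p q α 0 γ 0 =
      (-((Real.sqrt (p * q) : ℝ) : ℂ)) • T
        - (α : ℂ) • (site L sigmaMinus 0 - 1 + site L numOp 0)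
        - (γ : ℂ) • (site L sigmaPlus 0 - site L numOp 0) := by
    unfold asepGen
    rw [hsq]
    simp only [Complex.ofReal_zero, zero_smul, sub_zero]
    rfl
  have hT : D * T = Tᵀ * D := by
    rw [hTdef, Finset.mul_sum, Matrix.transpose_sum, Finset.sum_mul]
    refine Finset.sum_congr rfl fun j hj => ?_
    have hj1 : j + 1 < L := by have := Finset.mem_range.1 hj; omega
    rw [Matrix.mul_add, Matrix.mul_smul, Matrix.mul_smul, Matrix.mul_sub, Matrix.mul_sub,
      hLD j hj1, hRD j hj1, hAD j hj1, hBD j hj1,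
      Matrix.transpose_add, Matrix.transpose_smul, Matrix.transpose_smul,
      Matrix.transpose_sub, Matrix.transpose_sub,
      hLjT j, hRjT j, hAjT j hj1, hBjT j hj1,
      Matrix.add_mul, Matrix.smul_mul, Matrix.smul_mul, Matrix.sub_mul, Matrix.sub_mul]
    rw [smul_sub, smul_sub, smul_sub, smul_sub, smul_smul, smul_smul, hc1, hc2]
    abel
  have hBC : (α : ℂ) • (D * (site L sigmaMinus 0 - 1 + site L numOp 0))
        + (γ : ℂ) • (D * (site L sigmaPlus 0 - site L numOp 0))
      = (α : ℂ) • ((site L sigmaMinus 0 - 1 + site L numOp 0)ᵀ * D)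
        + (γ : ℂ) • ((site L sigmaPlus 0 - site L numOp 0)ᵀ * D) := by
    rw [Matrix.mul_add, Matrix.mul_sub, Matrix.mul_sub, Matrix.mul_one,
      hS0D, hP0D, hN0D,
      Matrix.transpose_add, Matrix.transpose_sub, Matrix.transpose_sub, Matrix.transpose_one,
      hS0T, hP0T, hN0T,
      Matrix.add_mul, Matrix.sub_mul, Matrix.sub_mul, Matrix.one_mul]
    rw [hα']
    match_scalars <;> field_simp
  have key : D * asepGen L p q α 0 γ 0 = (asepGen L p q α 0 γ 0)ᵀ * D := by
    rw [hGen,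
      Matrix.mul_sub, Matrix.mul_sub, Matrix.mul_smul, Matrix.mul_smul, Matrix.mul_smul,
      Matrix.transpose_sub, Matrix.transpose_sub,
      Matrix.transpose_smul, Matrix.transpose_smul, Matrix.transpose_smul,
      Matrix.sub_mul, Matrix.sub_mul, Matrix.smul_mul, Matrix.smul_mul, Matrix.smul_mul,
      hT, sub_sub, sub_sub, hBC]
  have hdet : IsUnit D.det := by
    rw [hDdef, Matrix.det_diagonal]
    exact isUnit_iff_ne_zero.2 (Finset.prod_ne_zero_iff.2 fun η _ =>
      mul_ne_zero (zpow_ne_zero _ hu) (zpow_ne_zero _ hu))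
  rw [hD, key, Matrix.mul_assoc, Matrix.mul_nonsing_inv _ hdet, Matrix.mul_one]
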